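/- If z₁ is a real root of the domination polynomial D(G, x) of some graph G and m is an odd positive integer, then (z₁ + 1)^{1/m} - 1 (the real m-th root) is a real root of the domination polynomial of G[K_m]. -/

import Mathlib

open Finset

open scoped Classical in
noncomputable def domPoly {V : Type*} [Fintype V] (G : SimpleGraph V) (x : ℝ) : ℝ :=
  ∑ S ∈ Finset.univ.powerset.filter
      (fun S : Finset V => ∀ v : V, v ∈ S ∨ ∃ u ∈ S, G.Adj u v), x ^ S.card

/-- The substitution `G[K n]`: replace each vertex of `G` by a clique of size `n`. -/
def compSub {V : Type*} (G : SimpleGraph V) (n : ℕ) : SimpleGraph (V × Fin n) where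
  Adj p q := G.Adj p.1 q.1 ∨ (p.1 = q.1 ∧ p.2 ≠ q.2)
  symm := by
    constructor
    rintro p q (h | ⟨h1, h2⟩)
    · exact Or.inl h.symm
    · exact Or.inr ⟨h1.symm, h2.symm⟩
  loopless := by
    constructor
    rintro p (h | ⟨_, h2⟩)
    · exact G.loopless.irrefl _ h
    · exact h2 rfl


lemma sumPowCardPowerset {α : Type*} [DecidableEq α] (s : Finset α) (x : ℝ) :
    ∑ A ∈ s.powerset, x ^ A.card = (x + 1) ^ s.card := by
  rw [← Finset.prod_const, Finset.prod_add]
  simp [Finset.prod_const, mul_comm]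

open scoped Classical in
lemma innerSum {V : Type*} [Fintype V] (m : ℕ) (x : ℝ) (S : Finset V) :
    ∑ F ∈ (Finset.univ : Finset (V → Finset (Fin m))).filter
        (fun F => Finset.univ.filter (fun v => F v ≠ ∅) = S),
      ∏ v, x ^ (F v).card = ((x + 1) ^ m - 1) ^ S.card := by
  have hfilter : (Finset.univ : Finset (V → Finset (Fin m))).filter
        (fun F => Finset.univ.filter (fun v => F v ≠ ∅) = S)
      = Fintype.piFinset (fun v => if v ∈ S then
          (Finset.univ.powerset : Finset (Finset (Fin m))).erase ∅ else {∅}) := by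
    ext F
    simp only [mem_filter, mem_univ, true_and, Fintype.mem_piFinset, Finset.ext_iff,
      mem_filter, mem_univ, true_and]
    constructor
    · intro h v
      by_cases hv : v ∈ S
      · simp [hv, (h v).mpr hv]
      · have hFv : F v = ∅ := by
          by_contra hne; exact hv ((h v).mp hne)
        simp [hv, hFv]
    · intro h v
      have := h v
      by_cases hv : v ∈ S <;> simp [hv] at this <;> simp [hv, this]
  rw [hfilter]
  have hkey := Finset.prod_univ_sum (fun v : V => if v ∈ S then
          (Finset.univ.powerset : Finset (Finset (Fin m))).erase ∅ else {∅})
    (fun _ (A : Finset (Fin m)) => x ^ A.card)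
  rw [← hkey]
  have : ∀ v : V, (∑ A ∈ (if v ∈ S then
          (Finset.univ.powerset : Finset (Finset (Fin m))).erase ∅ else {∅}), x ^ A.card)
      = if v ∈ S then (x + 1) ^ m - 1 else 1 := by
    intro v
    by_cases hv : v ∈ S
    · rw [if_pos hv, if_pos hv, Finset.sum_erase_eq_sub (by simp)]
      rw [sumPowCardPowerset]
      simp
    · simp [hv]
  simp_rw [this]
  rw [Finset.prod_ite_mem, Finset.univ_inter, Finset.prod_const]

open scoped Classical in
noncomputable def toSubset {V : Type*} [Fintype V] (m : ℕ) :
    (V → Finset (Fin m)) ≃ Finset (V × Fin m) where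
  toFun F := Finset.univ.filter (fun p => p.2 ∈ F p.1)
  invFun T := fun v => (T.filter (fun p => p.1 = v)).image Prod.snd
  left_inv F := by
    ext v i
    simp only [Finset.mem_image, Finset.mem_filter, Finset.mem_univ, true_and]
    constructor
    · rintro ⟨⟨u, j⟩, h1, h2⟩
      aesop
    · intro hi
      exact ⟨(v, i), ⟨hi, rfl⟩, rfl⟩
  right_inv T := by
    ext ⟨v, i⟩
    simp only [Finset.mem_filter, Finset.mem_univ, true_and, Finset.mem_image]
    constructor
    · rintro ⟨⟨u, j⟩, h1, h2⟩
      aesop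
    · intro h
      exact ⟨(v, i), ⟨h, rfl⟩, rfl⟩

open scoped Classical in
lemma card_toSubset {V : Type*} [Fintype V] (m : ℕ) (F : V → Finset (Fin m)) :
    (toSubset m F).card = ∑ v, (F v).card := by
  rw [Finset.card_eq_sum_card_fiberwise (f := Prod.fst) (t := Finset.univ)
    (fun p _ => Finset.mem_univ _)]
  refine Finset.sum_congr rfl fun v _ => ?_
  refine Finset.card_bij' (fun p _ => p.2) (fun i _ => (v, i)) ?_ ?_ ?_ ?_
  · rintro ⟨u, j⟩ hp
    simp only [toSubset, Finset.mem_filter, Finset.mem_univ, true_and,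
      Equiv.coe_fn_mk] at hp
    aesop
  · intro i hi
    simp [toSubset, hi]
  · rintro ⟨u, j⟩ hp
    simp only [toSubset, Finset.mem_filter, Finset.mem_univ, true_and,
      Equiv.coe_fn_mk] at hp
    aesop
  · intro i hi; rfl

open scoped Classical in
lemma dom_toSubset_iff {V : Type*} [Fintype V] (G : SimpleGraph V) {m : ℕ} (hm : 1 ≤ m)
    (F : V → Finset (Fin m)) :
    (∀ p : V × Fin m, p ∈ toSubset m F ∨ ∃ q ∈ toSubset m F, (compSub G m).Adj q p)
      ↔ ∀ v : V, v ∈ Finset.univ.filter (fun v => F v ≠ ∅)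
          ∨ ∃ u ∈ Finset.univ.filter (fun v => F v ≠ ∅), G.Adj u v := by
  have hmem : ∀ (v : V) (i : Fin m), (v, i) ∈ toSubset m F ↔ i ∈ F v := by
    intro v i; simp [toSubset]
  have hsupp : ∀ v : V, v ∈ Finset.univ.filter (fun v => F v ≠ ∅) ↔ (F v).Nonempty := by
    intro v; simp [Finset.nonempty_iff_ne_empty]
  constructor
  · intro h v
    let i0 : Fin m := ⟨0, hm⟩
    rcases h (v, i0) with hp | ⟨⟨u, j⟩, hq, hadj⟩
    · exact Or.inl ((hsupp v).mpr ⟨i0, (hmem v i0).mp hp⟩)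
    · rcases hadj with hGa | ⟨heq, _⟩
      · exact Or.inr ⟨u, (hsupp u).mpr ⟨j, (hmem u j).mp hq⟩, hGa⟩
      · refine Or.inl ((hsupp v).mpr ⟨j, ?_⟩)
        have : u = v := heq
        exact (hmem v j).mp (this ▸ hq)
  · intro h p
    obtain ⟨v, i⟩ := p
    rcases h v with hv | ⟨u, hu, hadj⟩
    · obtain ⟨j, hj⟩ := (hsupp v).mp hv
      by_cases hij : j = i
      · exact Or.inl ((hmem v i).mpr (hij ▸ hj))
      · exact Or.inr ⟨(v, j), (hmem v j).mpr hj, Or.inr ⟨rfl, hij⟩⟩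
    · obtain ⟨j, hj⟩ := (hsupp u).mp hu
      exact Or.inr ⟨(u, j), (hmem u j).mpr hj, Or.inl hadj⟩

set_option maxHeartbeats 2000000 in
theorem domPoly_compSub_root {V : Type*} [Fintype V] (G : SimpleGraph V) (z₁ : ℝ)
    (hz : domPoly G z₁ = 0) (m : ℕ) (hm : 1 ≤ m) (hodd : Odd m)
    (y : ℝ) (hy : y ^ m = z₁ + 1) :
    domPoly (compSub G m) (y - 1) = 0 := by
  classical
  set x : ℝ := y - 1 with hxdef
  have hx1 : x + 1 = y := by ring
  have hxm : (x + 1) ^ m - 1 = z₁ := by rw [hx1, hy]; ring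
  have key : domPoly (compSub G m) x = domPoly G z₁ := by
    rw [domPoly, domPoly, Finset.sum_filter, Finset.sum_filter,
      Finset.powerset_univ, Finset.powerset_univ]
    refine Eq.trans (Equiv.sum_comp (toSubset (V := V) m) _).symm ?_
    have step2 : (∑ F : V → Finset (Fin m),
        if ∀ v : V, v ∈ Finset.univ.filter (fun v => F v ≠ ∅)
            ∨ ∃ u ∈ Finset.univ.filter (fun v => F v ≠ ∅), G.Adj u v
        then ∏ v, x ^ (F v).card else 0)
        = ∑ S : Finset V, (if ∀ v : V, v ∈ S ∨ ∃ u ∈ S, G.Adj u v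
            then z₁ ^ S.card else 0) := by
      refine Eq.trans (Finset.sum_fiberwise Finset.univ
        (fun F : V → Finset (Fin m) => Finset.univ.filter (fun v => F v ≠ ∅)) _).symm ?_
      refine Finset.sum_congr rfl fun S _ => ?_
      by_cases hS : ∀ v : V, v ∈ S ∨ ∃ u ∈ S, G.Adj u v
      · rw [if_pos hS, ← hxm, ← innerSum m x S]
        refine Finset.sum_congr rfl fun F hF => ?_
        have hFS := (Finset.mem_filter.mp hF).2
        rw [if_pos (by rw [hFS]; exact hS)]
      · rw [if_neg hS]
        refine Finset.sum_eq_zero fun F hF => ?_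
        have hFS := (Finset.mem_filter.mp hF).2
        rw [if_neg (by rw [hFS]; exact hS)]
    refine Eq.trans (Finset.sum_congr rfl fun F _ => ?_) step2
    rw [card_toSubset, ← Finset.prod_pow_eq_pow_sum]
    simp only [dom_toSubset_iff G hm F]
    congr
  rw [key, hz]
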